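/- For any undirected graph G and any linear ordering φ of its vertices, the running buffer size of the bidirected dependency graph of G under φ satisfies VS(G, φ) ≤ RB(G^ℓ, φ) ≤ VS(G, φ) + 1. -/

import Mathlib

/-- The set of buffered vertices when the vertices in `S` have been processed:
vertices in `S` with an out-arc to an unprocessed vertex. -/
def bufferSet {V : Type*} [Fintype V] [DecidableEq V] (arc : V → V → Prop) [DecidableRel arc]
    (S : Finset V) : Finset V :=
  S.filter (fun u => ∃ v, v ∉ S ∧ arc u v)

/-- The running buffer size of the ordering `l` on the digraph with arc relation `arc`:
the peak buffer occupancy, accounting for the momentary extra buffer slot when the newly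
processed vertex itself enters the buffer before previously buffered vertices exit. -/
def RB {V : Type*} [Fintype V] [DecidableEq V] (arc : V → V → Prop) [DecidableRel arc]
    (l : List V) : ℕ :=
  (List.range l.length).foldl
    (fun m k =>
      let Sold := (l.take k).toFinset
      let Snew := (l.take (k + 1)).toFinset
      let tc : ℕ := if Snew \ Sold ⊆ bufferSet arc Snew then 1 else 0
      max m (max (bufferSet arc Snew).card ((bufferSet arc Sold).card + tc))) 0

/-- The minimum running buffer of a digraph: minimum of `RB` over all linear orderings. -/
noncomputable def MRB {V : Type*} [Fintype V] [DecidableEq V] (arc : V → V → Prop)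
    [DecidableRel arc] : ℕ :=
  sInf {k | ∃ l : List V, l.Nodup ∧ (∀ v, v ∈ l) ∧ RB arc l = k}
/-- The vertex separation value of a linear ordering `l` for the adjacency relation `adj`. -/
def VS {V : Type*} [Fintype V] [DecidableEq V] (adj : V → V → Prop) [DecidableRel adj]
    (l : List V) : ℕ :=
  (List.range l.length).foldl
    (fun m k => max m (bufferSet adj ((l.take (k + 1)).toFinset)).card) 0

/-- The vertex separation number: minimum of `VS` over all linear orderings. -/
noncomputable def MinVS {V : Type*} [Fintype V] [DecidableEq V] (adj : V → V → Prop)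
    [DecidableRel adj] : ℕ :=
  sInf {k | ∃ l : List V, l.Nodup ∧ (∀ v, v ∈ l) ∧ VS adj l = k}

/-- For any undirected graph `G` and any linear ordering of its vertices,
the running buffer size of the bidirected dependency graph `G^ℓ` (whose arc relation is
`G.Adj`) satisfies `VS(G, φ) ≤ RB(G^ℓ, φ) ≤ VS(G, φ) + 1`. -/
lemma foldl_max_le_init (g : ℕ → ℕ) : ∀ (L : List ℕ) (a : ℕ),
    a ≤ L.foldl (fun m k => max m (g k)) a
  | [], a => le_refl a
  | k :: L, a => le_trans (le_max_left a (g k)) (foldl_max_le_init g L _)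

lemma le_foldl_max_of_mem (g : ℕ → ℕ) : ∀ (L : List ℕ) (a k : ℕ), k ∈ L →
    g k ≤ L.foldl (fun m j => max m (g j)) a
  | [], _, _, h => absurd h List.not_mem_nil
  | j :: L, a, k, h => by
      rcases List.mem_cons.mp h with h | h
      · subst h
        exact le_trans (le_max_right a (g k)) (foldl_max_le_init g L _)
      · exact le_foldl_max_of_mem g L _ k h

lemma foldl_max_le (g : ℕ → ℕ) (c : ℕ) : ∀ (L : List ℕ) (a : ℕ), a ≤ c →
    (∀ k ∈ L, g k ≤ c) → L.foldl (fun m k => max m (g k)) a ≤ c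
  | [], a, ha, _ => ha
  | k :: L, a, ha, h => by
      exact foldl_max_le g c L _ (max_le ha (h k List.mem_cons_self))
        (fun j hj => h j (List.mem_cons_of_mem _ hj))

theorem vs_le_rb_le_vs_add_one {V : Type*} [Fintype V] [DecidableEq V]
    (G : SimpleGraph V) [DecidableRel G.Adj] (l : List V)
    (hnodup : l.Nodup) (hcomplete : ∀ v, v ∈ l) :
    VS G.Adj l ≤ RB G.Adj l ∧ RB G.Adj l ≤ VS G.Adj l + 1 := by
  classical
  set g : ℕ → ℕ := fun k => (bufferSet G.Adj ((l.take (k + 1)).toFinset)).card with hg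
  set h : ℕ → ℕ := fun k =>
      max (bufferSet G.Adj ((l.take (k + 1)).toFinset)).card
        ((bufferSet G.Adj ((l.take k).toFinset)).card +
          (if ((l.take (k+1)).toFinset \ (l.take k).toFinset) ⊆
              bufferSet G.Adj ((l.take (k+1)).toFinset) then 1 else 0)) with hh
  have hVS : VS G.Adj l = (List.range l.length).foldl (fun m k => max m (g k)) 0 := rfl
  have hRB : RB G.Adj l = (List.range l.length).foldl (fun m k => max m (h k)) 0 := rfl
  constructor
  · rw [hVS, hRB]
    apply foldl_max_le g (((List.range l.length).foldl (fun m k => max m (h k)) 0))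
      _ _ (Nat.zero_le _)
    intro k hk
    exact le_trans (le_max_left _ _) (le_foldl_max_of_mem h _ 0 k hk)
  · rw [hVS, hRB]
    apply foldl_max_le h (((List.range l.length).foldl (fun m k => max m (g k)) 0) + 1)
      _ _ (Nat.zero_le _)
    intro k hk
    have hgk : ∀ j ∈ List.range l.length, g j ≤
        (List.range l.length).foldl (fun m k => max m (g k)) 0 :=
      fun j hj => le_foldl_max_of_mem g _ 0 j hj
    apply max_le
    · exact le_trans (hgk k hk) (Nat.le_succ _)
    · have h2 : (bufferSet G.Adj ((l.take k).toFinset)).card ≤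
          (List.range l.length).foldl (fun m j => max m (g j)) 0 := by
        cases k with
        | zero => simp [bufferSet]
        | succ j =>
            apply hgk j
            rw [List.mem_range] at hk ⊢
            omega
      have h3 : (if ((l.take (k+1)).toFinset \ (l.take k).toFinset) ⊆
          bufferSet G.Adj ((l.take (k+1)).toFinset) then 1 else 0) ≤ 1 := by
        split <;> omega
      omega
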